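/- Let O_m = 2π^{(m+1)/2}/Γ((m+1)/2) denote the m-dimensional volume of the unit sphere S^m. Then for all m ≥ 1, 2·O_{m-1}/O_m ≤ √m. -/

import Mathlib

open Real

lemma Gamma_add_half_le_aux (x : ℝ) (hx : 0 < x) :
    Real.Gamma (x + 1/2) ≤ Real.sqrt x * Real.Gamma x := by
  have hG : 0 < Real.Gamma x := Real.Gamma_pos_of_pos hx
  have hG2 : 0 < Real.Gamma (x + 1/2) := Real.Gamma_pos_of_pos (by linarith)
  have h := Real.convexOn_log_Gamma.2 (Set.mem_Ioi.mpr hx)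
      (Set.mem_Ioi.mpr (by linarith : (0:ℝ) < x + 1))
      (by norm_num : (0:ℝ) ≤ 1/2) (by norm_num : (0:ℝ) ≤ 1/2) (by norm_num)
  simp only [smul_eq_mul, Function.comp_apply] at h
  have hmid : (1/2 : ℝ) * x + 1/2 * (x + 1) = x + 1/2 := by ring
  rw [hmid, Real.Gamma_add_one hx.ne', Real.log_mul hx.ne' hG.ne'] at h
  have h2 : Real.log (Real.Gamma (x + 1/2)) ≤ Real.log (Real.sqrt x * Real.Gamma x) := by
    rw [Real.log_mul (Real.sqrt_pos.mpr hx).ne' hG.ne', Real.log_sqrt hx.le]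
    linarith
  calc Real.Gamma (x + 1/2) = Real.exp (Real.log (Real.Gamma (x + 1/2))) :=
        (Real.exp_log hG2).symm
    _ ≤ Real.exp (Real.log (Real.sqrt x * Real.Gamma x)) := Real.exp_le_exp.mpr h2
    _ = Real.sqrt x * Real.Gamma x := Real.exp_log (by positivity)

/-- The m-dimensional volume of the unit sphere `S^m ⊆ ℝ^{m+1}`. -/
noncomputable def sphereVol (m : ℕ) : ℝ :=
  2 * Real.pi ^ (((m : ℝ) + 1) / 2) / Real.Gamma (((m : ℝ) + 1) / 2)

theorem sphereVol_ratio_le_sqrt (m : ℕ) (hm : 1 ≤ m) :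
    2 * sphereVol (m - 1) / sphereVol m ≤ Real.sqrt m := by
  have hmR : (1:ℝ) ≤ (m:ℝ) := by exact_mod_cast hm
  have hcast : ((m - 1 : ℕ) : ℝ) = (m : ℝ) - 1 := by
    rw [Nat.cast_sub hm]; norm_num
  set x : ℝ := (m : ℝ) / 2 with hxdef
  have hx : 0 < x := by positivity
  have hx1 : (((m - 1 : ℕ) : ℝ) + 1) / 2 = x := by rw [hcast]; ring
  have hx2 : ((m : ℝ) + 1) / 2 = x + 1/2 := by rw [hxdef]; ring
  have hpi : (0:ℝ) < Real.pi := Real.pi_pos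
  have hGx : 0 < Real.Gamma x := Real.Gamma_pos_of_pos hx
  have hGx2 : 0 < Real.Gamma (x + 1/2) := Real.Gamma_pos_of_pos (by linarith)
  have hp1 : (0:ℝ) < Real.pi ^ x := Real.rpow_pos_of_pos hpi x
  have hp2 : (0:ℝ) < Real.pi ^ (x + 1/2) := Real.rpow_pos_of_pos hpi _
  rw [sphereVol, sphereVol, hx1, hx2]
  have hrw : 2 * (2 * Real.pi ^ x / Real.Gamma x) /
      (2 * Real.pi ^ (x + 1/2) / Real.Gamma (x + 1/2)) =
      2 * Real.Gamma (x + 1/2) / (Real.sqrt Real.pi * Real.Gamma x) := by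
    rw [Real.rpow_add hpi, ← Real.sqrt_eq_rpow]
    have hs : 0 < Real.sqrt Real.pi := Real.sqrt_pos.mpr hpi
    field_simp
  rw [hrw]
  have key := Gamma_add_half_le_aux x hx
  have hs : 0 < Real.sqrt Real.pi := Real.sqrt_pos.mpr hpi
  calc 2 * Real.Gamma (x + 1/2) / (Real.sqrt Real.pi * Real.Gamma x)
      ≤ 2 * (Real.sqrt x * Real.Gamma x) / (Real.sqrt Real.pi * Real.Gamma x) := by
        gcongr
    _ = 2 * Real.sqrt x / Real.sqrt Real.pi := by field_simp
    _ = Real.sqrt (4 * x / Real.pi) := by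
        rw [Real.sqrt_div' _ hpi.le, Real.sqrt_mul (by norm_num : (0:ℝ) ≤ 4),
          show Real.sqrt 4 = 2 by rw [show (4:ℝ) = 2^2 by norm_num, Real.sqrt_sq]; norm_num]
    _ ≤ Real.sqrt m := by
        apply Real.sqrt_le_sqrt
        rw [hxdef, div_le_iff₀ hpi]
        nlinarith [Real.pi_gt_three]
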